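/- Let R → R₁, R → R₂, R₁ → S, R₂ → S be a commutative square of commutative rings that is cartesian, and suppose for every s ∈ S there exist n and A₁ ∈ GL_n(R₁), A₂ ∈ GL_n(R₂) with h₁(A₁)·T(s) = h₂(A₂) where T(s) = [[1, s],[0,1]] ⊕ I_{n−2}. Then for every s ∈ S, the ideal J(s) = {r ∈ R : h₁(g₁(r))·s ∈ h₁(R₁) + h₂(R₂)} generates the unit ideal in both R₁ and R₂. -/

import Mathlib

/-- in a cartesian commutative square, if every `T(s) = [[1,s],[0,1]] ⊕ I`
is a product `h₁(A₁)⁻¹·h₂(A₂)` of invertible matrices over `R₁` and `R₂`, then the ideal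
`J(s)` generates the unit ideal in both `R₁` and `R₂`. -/
theorem Js_generates_unit_ideal
    {R R₁ R₂ S : Type*} [CommRing R] [CommRing R₁] [CommRing R₂] [CommRing S]
    (g₁ : R →+* R₁) (g₂ : R →+* R₂) (h₁ : R₁ →+* S) (h₂ : R₂ →+* S)
    (hcomm : h₁.comp g₁ = h₂.comp g₂)
    (hinj : Function.Injective fun r : R => (g₁ r, g₂ r))
    (himage : ∀ (r₁ : R₁) (r₂ : R₂), h₁ r₁ = h₂ r₂ → ∃ r : R, g₁ r = r₁ ∧ g₂ r = r₂)
    (hpatch : ∀ s : S, ∃ (n : ℕ), 2 ≤ n ∧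
      ∃ (A₁ : Matrix (Fin n) (Fin n) R₁) (A₂ : Matrix (Fin n) (Fin n) R₂),
        IsUnit A₁ ∧ IsUnit A₂ ∧
        A₁.map h₁ * (Matrix.of fun i j : Fin n =>
          if i = j then 1 else if (i : ℕ) = 0 ∧ (j : ℕ) = 1 then s else 0) = A₂.map h₂) :
    ∀ s : S,
      Ideal.span (g₁ '' {r : R | ∃ (a : R₁) (b : R₂), h₁ (g₁ r) * s = h₁ a + h₂ b}) = ⊤ ∧
      Ideal.span (g₂ '' {r : R | ∃ (a : R₁) (b : R₂), h₁ (g₁ r) * s = h₁ a + h₂ b}) = ⊤ := by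
  intro s
  obtain ⟨n, hn, A₁, A₂, hU₁, hU₂, hEq⟩ := hpatch s
  have h0 : (0 : ℕ) < n := by omega
  have h1 : (1 : ℕ) < n := by omega
  set i0 : Fin n := ⟨0, h0⟩ with hi0
  set i1 : Fin n := ⟨1, h1⟩ with hi1
  set T : Matrix (Fin n) (Fin n) S := Matrix.of fun i j : Fin n =>
    if i = j then 1 else if (i : ℕ) = 0 ∧ (j : ℕ) = 1 then s else 0 with hT
  have hentry : ∀ i j, ∑ k, h₁ (A₁ i k) * T k j = h₂ (A₂ i j) := by
    intro i j
    have := congrFun (congrFun hEq i) j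
    simpa [Matrix.mul_apply, Matrix.map_apply] using this
  -- column 0 agrees
  have hcol0 : ∀ i, h₁ (A₁ i i0) = h₂ (A₂ i i0) := by
    intro i
    have h := hentry i i0
    rw [← h, Finset.sum_eq_single i0]
    · simp [T]
    · intro k _ hk
      have hTk : T k i0 = 0 := by
        simp only [hT, Matrix.of_apply]
        rw [if_neg hk, if_neg]
        simp [hi0]
      rw [hTk, mul_zero]
    · simp
  -- column 1 relation
  have hcol1 : ∀ i, h₁ (A₁ i i0) * s = h₂ (A₂ i i1) - h₁ (A₁ i i1) := by
    intro i
    have h := hentry i i1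
    have hT1 : ∀ k, T k i1 = (if k = i1 then (1 : S) else 0) + (if k = i0 then s else 0) := by
      intro k
      simp only [hT, Matrix.of_apply]
      have hne01 : i1 ≠ i0 := by simp [hi0, hi1, Fin.ext_iff]
      have hne01' : i0 ≠ i1 := hne01.symm
      rcases eq_or_ne k i1 with hk1 | hk1
      · have hne : k ≠ i0 := by rw [hk1]; simp [hi0, hi1, Fin.ext_iff]
        simp [hk1, hne, hne01]
      · rcases eq_or_ne k i0 with hk0 | hk0
        · have hk0' : (k : ℕ) = 0 := by rw [hk0]
          rw [if_neg hk1, if_neg hk1, if_pos hk0, if_pos (And.intro hk0' rfl), zero_add]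
        · have hk0' : (k : ℕ) ≠ 0 := by
            intro hc; exact hk0 (Fin.ext (by simpa [hi0] using hc))
          simp [hk1, hk0, hk0']
    have hsum : ∑ k, h₁ (A₁ i k) * T k i1 = h₁ (A₁ i i1) + h₁ (A₁ i i0) * s := by
      simp only [hT1, mul_add, Finset.sum_add_distrib, mul_ite, mul_one, mul_zero,
        Finset.sum_ite_eq', Finset.mem_univ, if_true]
    rw [hsum] at h
    linear_combination h
  choose r hr1 hr2 using fun i => himage _ _ (hcol0 i)
  have hmem : ∀ i, r i ∈ {r : R | ∃ (a : R₁) (b : R₂), h₁ (g₁ r) * s = h₁ a + h₂ b} := by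
    intro i
    refine ⟨-(A₁ i i1), A₂ i i1, ?_⟩
    rw [hr1 i, map_neg, hcol1 i]
    ring
  constructor
  · -- R₁ side
    obtain ⟨u, hu⟩ := hU₁
    have hB : (↑u⁻¹ : Matrix (Fin n) (Fin n) R₁) * A₁ = 1 := by
      rw [← hu]; exact u.inv_mul
    have h1e : (1 : R₁) = ∑ k, (↑u⁻¹ : Matrix (Fin n) (Fin n) R₁) i0 k * A₁ k i0 := by
      have := congrFun (congrFun hB i0) i0
      simp only [Matrix.mul_apply] at this
      rw [this]; simp
    rw [Ideal.eq_top_iff_one, h1e]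
    refine Ideal.sum_mem _ fun k _ => Ideal.mul_mem_left _ _ ?_
    exact Ideal.subset_span ⟨r k, hmem k, hr1 k⟩
  · obtain ⟨u, hu⟩ := hU₂
    have hB : (↑u⁻¹ : Matrix (Fin n) (Fin n) R₂) * A₂ = 1 := by
      rw [← hu]; exact u.inv_mul
    have h1e : (1 : R₂) = ∑ k, (↑u⁻¹ : Matrix (Fin n) (Fin n) R₂) i0 k * A₂ k i0 := by
      have := congrFun (congrFun hB i0) i0
      simp only [Matrix.mul_apply] at this
      rw [this]; simp
    rw [Ideal.eq_top_iff_one, h1e]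
    refine Ideal.sum_mem _ fun k _ => Ideal.mul_mem_left _ _ ?_
    exact Ideal.subset_span ⟨r k, hmem k, hr2 k⟩
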